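/- Let m ≥ 1 be a natural number and s_{2m} = 1/√(4m²+1). Then the function C_{2m}(x) = |T_{2m}(x)| + |x·T_{2m}'(x)| is monotonically increasing on the interval [0, s_{2m}]; in particular C_{2m}(x) ≥ C_{2m}(0) = 1 for all 0 ≤ x ≤ s_{2m}. -/

import Mathlib

open Polynomial Real

lemma cheb_F_monotone (a : ℝ) (ha : 2 ≤ a) :
    MonotoneOn (fun φ : ℝ => Real.cos (a * φ) + a * Real.tan φ * Real.sin (a * φ))
      (Set.Icc 0 (π / (2 * a))) := by
  have hapos : 0 < a := by linarith
  have hpi := Real.pi_pos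
  have hb : π / (2 * a) ≤ π / 4 := by
    apply div_le_div_of_nonneg_left hpi.le (by norm_num) (by linarith)
  have hcos : ∀ φ : ℝ, φ ∈ Set.Icc 0 (π / (2 * a)) → 0 < Real.cos φ := by
    intro φ hφ
    apply Real.cos_pos_of_mem_Ioo
    constructor
    · linarith [hφ.1]
    · have := hφ.2; nlinarith
  have hderiv : ∀ φ ∈ Set.Icc 0 (π / (2 * a)),
      HasDerivAt (fun φ : ℝ => Real.cos (a * φ) + a * Real.tan φ * Real.sin (a * φ))
        (-Real.sin (a * φ) * a +
          (a * (1 / Real.cos φ ^ 2) * Real.sin (a * φ) +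
            a * Real.tan φ * (Real.cos (a * φ) * a))) φ := by
    intro φ hφ
    have hc := hcos φ hφ
    have hid : HasDerivAt (fun y : ℝ => a * y) a φ := by
      simpa using (hasDerivAt_id φ).const_mul a
    have h1 : HasDerivAt (fun φ : ℝ => Real.cos (a * φ)) (-Real.sin (a * φ) * a) φ :=
      (Real.hasDerivAt_cos (a * φ)).comp φ hid
    have h2 : HasDerivAt (fun φ : ℝ => Real.sin (a * φ)) (Real.cos (a * φ) * a) φ :=
      (Real.hasDerivAt_sin (a * φ)).comp φ hid
    have h3 : HasDerivAt (fun φ : ℝ => a * Real.tan φ) (a * (1 / Real.cos φ ^ 2)) φ :=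
      (Real.hasDerivAt_tan hc.ne').const_mul a
    exact h1.add ((h3.mul h2))
  apply monotoneOn_of_deriv_nonneg (convex_Icc _ _)
  · intro φ hφ
    exact (hderiv φ hφ).continuousAt.continuousWithinAt
  · intro φ hφ
    rw [interior_Icc] at hφ
    exact (hderiv φ (Set.mem_Icc_of_Ioo hφ)).differentiableAt.differentiableWithinAt
  · intro φ hφ
    rw [interior_Icc] at hφ
    have hφ' := Set.mem_Icc_of_Ioo hφ
    rw [(hderiv φ hφ').deriv]
    have hc := hcos φ hφ'
    have hsφ : 0 ≤ Real.sin φ := Real.sin_nonneg_of_nonneg_of_le_pi hφ.1.le (by nlinarith [hφ'.2])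
    have htan : 0 ≤ Real.tan φ := by
      rw [Real.tan_eq_sin_div_cos]; positivity
    have haφ : a * φ ≤ π / 2 := by
      have := hφ'.2
      calc a * φ ≤ a * (π / (2 * a)) := by nlinarith
        _ = π / 2 := by field_simp
    have hsin : 0 ≤ Real.sin (a * φ) := Real.sin_nonneg_of_nonneg_of_le_pi (by nlinarith [hφ.1]) (by linarith)
    have hcos2 : 0 ≤ Real.cos (a * φ) := Real.cos_nonneg_of_mem_Icc ⟨by nlinarith [hφ.1], haφ⟩
    have hsec : 1 ≤ 1 / Real.cos φ ^ 2 := by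
      rw [le_div_iff₀ (by positivity)]
      nlinarith [Real.neg_one_le_cos φ, Real.cos_le_one φ]
    nlinarith [mul_nonneg (mul_nonneg hapos.le htan) (mul_nonneg hcos2 hapos.le),
      mul_nonneg hsin (sub_nonneg.2 hsec)]

/-- For `m ≥ 1`, the function `C_{2m}(x) = |T_{2m}(x)| + |x·T_{2m}'(x)|` is
monotonically increasing on `[0, s_{2m}]`, where `s_{2m} = 1/√(4m²+1)`;
in particular `C_{2m}(x) ≥ C_{2m}(0) = 1` on this interval. -/
theorem chebyshev_C_monotone_on_small_interval
    (m : ℕ) (hm : 1 ≤ m) :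
    MonotoneOn
      (fun x : ℝ => |(Chebyshev.T ℝ (2 * m)).eval x| +
        |x * (derivative (Chebyshev.T ℝ (2 * m))).eval x|)
      (Set.Icc 0 (1 / Real.sqrt (4 * (m : ℝ) ^ 2 + 1))) ∧
    (|(Chebyshev.T ℝ (2 * m)).eval (0 : ℝ)| +
      |(0 : ℝ) * (derivative (Chebyshev.T ℝ (2 * m))).eval 0| = 1) ∧
    ∀ x : ℝ, 0 ≤ x → x ≤ 1 / Real.sqrt (4 * (m : ℝ) ^ 2 + 1) →
      1 ≤ |(Chebyshev.T ℝ (2 * m)).eval x| +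
        |x * (derivative (Chebyshev.T ℝ (2 * m))).eval x| := by
  have hpi := Real.pi_pos
  set a : ℝ := 2 * m with ha_def
  have hm1 : (1:ℝ) ≤ (m:ℝ) := by exact_mod_cast hm
  have ha2 : (2:ℝ) ≤ a := by rw [ha_def]; linarith
  have hapos : (0:ℝ) < a := by linarith
  set s : ℝ := 1 / Real.sqrt (4 * (m:ℝ)^2 + 1) with hs_def
  set b : ℝ := π / (2 * a) with hb_def
  have hsqrt_pos : 0 < Real.sqrt (4 * (m:ℝ)^2 + 1) := Real.sqrt_pos.2 (by positivity)
  have hsqrt : a < Real.sqrt (4 * (m:ℝ)^2 + 1) := by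
    rw [show a = 2 * (m:ℝ) from ha_def]
    rw [show (4:ℝ) * (m:ℝ)^2 + 1 = (2*(m:ℝ))^2 + 1 by ring]
    exact (Real.lt_sqrt (by positivity)).2 (by nlinarith)
  have hs_lt : s < 1 / a := by
    rw [hs_def]
    exact one_div_lt_one_div_of_lt hapos hsqrt
  have hs_pos : 0 < s := by rw [hs_def]; positivity
  have hb_pos : 0 < b := by rw [hb_def]; positivity
  have hb4 : b ≤ π / 4 := by
    rw [hb_def]
    apply div_le_div_of_nonneg_left hpi.le (by norm_num) (by linarith)
  have hb2 : b ≤ π / 2 := by linarith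
  have hab : a * b = π / 2 := by rw [hb_def]; field_simp
  have hsinb : s ≤ Real.sin b := by
    have h := Real.mul_le_sin (x := b) hb_pos.le hb2
    have h2 : 2 / π * b = 1 / a := by rw [hb_def]; field_simp
    rw [h2] at h
    linarith
  have harcsin_b : Real.arcsin s ≤ b := by
    have h := Real.monotone_arcsin hsinb
    rwa [Real.arcsin_sin (by linarith) hb2] at h
  -- EqOn
  have heq : Set.EqOn
      ((fun φ : ℝ => Real.cos (a * φ) + a * Real.tan φ * Real.sin (a * φ)) ∘ Real.arcsin)
      (fun x : ℝ => |(Chebyshev.T ℝ (2 * m)).eval x| +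
        |x * (derivative (Chebyshev.T ℝ (2 * m))).eval x|)
      (Set.Icc 0 s) := by
    intro x hx
    obtain ⟨hx0, hxs⟩ := hx
    have hx1 : x ≤ 1 := by
      have : (1:ℝ)/a ≤ 1/2 := by
        apply div_le_div_of_nonneg_left (by norm_num) (by norm_num) ha2
      linarith
    set φ : ℝ := Real.arcsin x with hφ_def
    have hφ0 : 0 ≤ φ := Real.arcsin_nonneg.2 hx0
    have hφb : φ ≤ b := le_trans (Real.monotone_arcsin hxs) harcsin_b
    have hsinφ : Real.sin φ = x := Real.sin_arcsin (by linarith) hx1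
    have hcosφ : 0 < Real.cos φ := Real.cos_pos_of_mem_Ioo ⟨by linarith, by linarith⟩
    have haφ : a * φ ≤ π / 2 := by nlinarith
    have haφ0 : 0 ≤ a * φ := by positivity
    have hx_cos : Real.cos (π/2 - φ) = x := by rw [Real.cos_pi_div_two_sub, hsinφ]
    have hT : (Chebyshev.T ℝ (2 * m)).eval x = (-1:ℝ)^m * Real.cos (a*φ) := by
      rw [← hx_cos, Polynomial.Chebyshev.T_real_cos]
      rw [show ((2 * (m:ℤ) : ℤ):ℝ) * (π/2 - φ) = (m:ℕ) * π - a * φ by push_cast [ha_def]; ring]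
      exact Real.cos_nat_mul_pi_sub _ m
    set u : ℝ := (Chebyshev.U ℝ (2 * (m:ℤ) - 1)).eval x with hu_def
    have hUeq : u * Real.cos φ = -((-1:ℝ)^m * Real.sin (a*φ)) := by
      have h := Polynomial.Chebyshev.U_real_cos (π/2 - φ) (2 * (m:ℤ) - 1)
      rw [hx_cos, Real.sin_pi_div_two_sub] at h
      rw [hu_def, h]
      rw [show (((2 * (m:ℤ) - 1 : ℤ):ℝ) + 1) * (π/2 - φ) = (m:ℕ) * π - a * φ by
        push_cast [ha_def]; ring]
      exact Real.sin_nat_mul_pi_sub _ m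
    have hdT : (derivative (Chebyshev.T ℝ (2 * m))).eval x = a * u := by
      rw [Polynomial.Chebyshev.T_derivative_eq_U]
      push_cast [hu_def, ha_def]
      simp
    have hu : u = -((-1:ℝ)^m * Real.sin (a*φ)) / Real.cos φ := by
      field_simp at hUeq ⊢
      linarith [hUeq]
    have hsinaφ : 0 ≤ Real.sin (a*φ) := Real.sin_nonneg_of_nonneg_of_le_pi haφ0 (by linarith)
    have hcosaφ : 0 ≤ Real.cos (a*φ) := Real.cos_nonneg_of_mem_Icc ⟨by linarith, haφ⟩
    have habs1 : |(Chebyshev.T ℝ (2 * m)).eval x| = Real.cos (a*φ) := by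
      rw [hT, abs_mul, abs_pow, abs_neg, abs_one, one_pow, one_mul, abs_of_nonneg hcosaφ]
    have habs2 : |x * (derivative (Chebyshev.T ℝ (2 * m))).eval x|
        = x * a * Real.sin (a*φ) / Real.cos φ := by
      rw [hdT, hu]
      rw [show x * (a * (-((-1:ℝ)^m * Real.sin (a*φ)) / Real.cos φ))
        = (-1:ℝ)^m * -(x * a * Real.sin (a*φ) / Real.cos φ) by ring]
      rw [abs_mul, abs_pow, abs_neg, abs_one, one_pow, one_mul, abs_neg,
        abs_of_nonneg (by positivity)]
    simp only [Function.comp_apply, ← hφ_def]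
    rw [habs1, habs2, Real.tan_eq_sin_div_cos, hsinφ]
    ring
  have hmono : MonotoneOn
      (fun x : ℝ => |(Chebyshev.T ℝ (2 * m)).eval x| +
        |x * (derivative (Chebyshev.T ℝ (2 * m))).eval x|)
      (Set.Icc 0 s) := by
    apply MonotoneOn.congr _ heq
    have hF := cheb_F_monotone a ha2
    intro x hx y hy hxy
    have hmx : Real.arcsin x ∈ Set.Icc 0 (π / (2 * a)) :=
      ⟨Real.arcsin_nonneg.2 hx.1, le_trans (Real.monotone_arcsin hx.2) harcsin_b⟩
    have hmy : Real.arcsin y ∈ Set.Icc 0 (π / (2 * a)) :=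
      ⟨Real.arcsin_nonneg.2 hy.1, le_trans (Real.monotone_arcsin hy.2) harcsin_b⟩
    exact hF hmx hmy (Real.monotone_arcsin hxy)
  have h0mem : (0:ℝ) ∈ Set.Icc 0 s := ⟨le_refl _, hs_pos.le⟩
  have hC0 : |(Chebyshev.T ℝ (2 * m)).eval (0 : ℝ)| +
      |(0 : ℝ) * (derivative (Chebyshev.T ℝ (2 * m))).eval 0| = 1 := by
    have h := heq h0mem
    simp only [Function.comp_apply, Real.arcsin_zero, mul_zero, Real.cos_zero,
      Real.sin_zero, Real.tan_zero] at h
    rw [← h]; ring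
  refine ⟨hmono, hC0, fun x hx0 hxs => ?_⟩
  have := hmono h0mem ⟨hx0, hxs⟩ hx0
  simp only at this
  rw [hC0] at this
  exact this
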